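/- Every instance of selfish bin covering admits a Nash equilibrium π with p(π) = OPT; that is, the price of stability with respect to Nash equilibria is 1. -/

import Mathlib

open Finset

/-- Total size of the items in a bin. -/
def binSize {n : ℕ} (a : Fin n → ℕ) (B : Finset (Fin n)) : ℕ := ∑ j ∈ B, a j

/-- The social welfare of a partition: the number of covered bins. -/
def welfare {n : ℕ} (a : Fin n → ℕ) (b : ℕ)
    (π : Finpartition (univ : Finset (Fin n))) : ℕ :=
  (π.parts.filter fun B => b ≤ binSize a B).card

/-- The payoff of item `j` when it lies in bin `B`. -/
def payoffIn {n : ℕ} (a : Fin n → ℕ) (b : ℕ) (j : Fin n) (B : Finset (Fin n)) : ℚ :=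
  if b ≤ binSize a B then (a j : ℚ) / (binSize a B : ℚ) else 0

/-- Nash equilibrium. -/
def IsNE {n : ℕ} (a : Fin n → ℕ) (b : ℕ)
    (π : Finpartition (univ : Finset (Fin n))) : Prop :=
  (∀ j : Fin n, ∀ B ∈ π.parts, j ∉ B →
      payoffIn a b j (insert j B) ≤ payoffIn a b j (π.part j)) ∧
  ∀ j : Fin n, payoffIn a b j {j} ≤ payoffIn a b j (π.part j)

/-- A partition is reasonable if at most one bin is uncovered. -/
def Reasonable {n : ℕ} (a : Fin n → ℕ) (b : ℕ)
    (π : Finpartition (univ : Finset (Fin n))) : Prop :=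
  (π.parts.filter fun B => binSize a B < b).card ≤ 1

/-- A bin is minimal covered if it is covered and removing any member uncovers it. -/
def MinimalCovered {n : ℕ} (a : Fin n → ℕ) (b : ℕ) (B : Finset (Fin n)) : Prop :=
  b ≤ binSize a B ∧ ∀ j ∈ B, binSize a (B.erase j) < b

/-- A partition is rational if it is reasonable and every covered bin is minimal covered. -/
def RationalPartition {n : ℕ} (a : Fin n → ℕ) (b : ℕ)
    (π : Finpartition (univ : Finset (Fin n))) : Prop :=
  Reasonable a b π ∧ ∀ B ∈ π.parts, b ≤ binSize a B → MinimalCovered a b B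

/-- `B_m(π)`: the unique uncovered bin of a (rational) partition if one exists, `∅` otherwise. -/
def uncoveredBin {n : ℕ} (a : Fin n → ℕ) (b : ℕ)
    (π : Finpartition (univ : Finset (Fin n))) : Finset (Fin n) :=
  (π.parts.filter fun B => binSize a B < b).sup id

/-- `δ(B) = s(B)` if `B` is covered, `+∞` otherwise. -/
def delta {n : ℕ} (a : Fin n → ℕ) (b : ℕ) (B : Finset (Fin n)) : ℕ∞ :=
  if b ≤ binSize a B then (binSize a B : ℕ∞) else ⊤

/-- Fireable Nash equilibrium of type (I). -/
def IsFNE1 {n : ℕ} (a : Fin n → ℕ) (b : ℕ)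
    (π : Finpartition (univ : Finset (Fin n))) : Prop :=
  RationalPartition a b π ∧
  ¬ ∃ j : Fin n, b ≤ binSize a (π.part j) ∧
      MinimalCovered a b (insert j (uncoveredBin a b π)) ∧
      binSize a (uncoveredBin a b π) + a j < binSize a (π.part j)

/-- Fireable Nash equilibrium of type (II). -/
def IsFNE2 {n : ℕ} (a : Fin n → ℕ) (b : ℕ)
    (π : Finpartition (univ : Finset (Fin n))) : Prop :=
  RationalPartition a b π ∧
  ¬ ∃ (j : Fin n) (E : Finset (Fin n)), b ≤ binSize a (π.part j) ∧
      E ⊆ uncoveredBin a b π ∧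
      MinimalCovered a b (insert j (uncoveredBin a b π \ E)) ∧
      binSize a (uncoveredBin a b π \ E) + a j < binSize a (π.part j)

/-- Fireable Nash equilibrium of type (III). -/
def IsFNE3 {n : ℕ} (a : Fin n → ℕ) (b : ℕ)
    (π : Finpartition (univ : Finset (Fin n))) : Prop :=
  RationalPartition a b π ∧
  ¬ ∃ (j : Fin n) (Bi E : Finset (Fin n)), Bi ∈ π.parts ∧ j ∉ Bi ∧ E ⊆ Bi ∧
      MinimalCovered a b (insert j (Bi \ E)) ∧
      ((binSize a (Bi \ E) + a j : ℕ) : ℕ∞) < min (delta a b Bi) (delta a b (π.part j))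

/-- Modified strong Nash equilibrium. -/
def IsMSNE {n : ℕ} (a : Fin n → ℕ) (b : ℕ)
    (π : Finpartition (univ : Finset (Fin n))) : Prop :=
  RationalPartition a b π ∧
  ¬ ∃ (Bi E : Finset (Fin n)), Bi ∈ π.parts ∧ b ≤ binSize a Bi ∧ E ⊆ Bi ∧
      binSize a (uncoveredBin a b π) < binSize a (Bi \ E) ∧
      MinimalCovered a b (uncoveredBin a b π ∪ E)

/-- Strong Nash equilibrium. -/
def IsSNE {n : ℕ} (a : Fin n → ℕ) (b : ℕ)
    (π : Finpartition (univ : Finset (Fin n))) : Prop :=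
  ¬ ∃ B : Finset (Fin n), b ≤ binSize a B ∧
      ∀ j ∈ B, binSize a (π.part j) < b ∨ binSize a B < binSize a (π.part j)

/-- `F` is a minimum subset w.r.t. `(E, b)`. -/
def IsMinSubset {n : ℕ} (a : Fin n → ℕ) (b : ℕ) (F E : Finset (Fin n)) : Prop :=
  F ⊆ E ∧ b ≤ binSize a F ∧ ∀ G ⊆ E, b ≤ binSize a G → binSize a F ≤ binSize a G

section Aux


variable {n : ℕ}

lemma sum_sq_le_sq_sum' {α : Type*} (s : Finset α) (f : α → ℕ) :
    ∑ x ∈ s, (f x) ^ 2 ≤ (∑ x ∈ s, f x) ^ 2 := by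
  classical
  induction s using Finset.induction with
  | empty => simp
  | @insert a s h ih =>
    rw [Finset.sum_insert h, Finset.sum_insert h, add_sq]
    linarith [ih, Nat.zero_le (2 * f a * ∑ x ∈ s, f x)]

lemma binSize_mono (a : Fin n → ℕ) {B C : Finset (Fin n)} (h : B ⊆ C) :
    binSize a B ≤ binSize a C :=
  Finset.sum_le_sum_of_subset h

lemma sum_parts_eq (π : Finpartition (univ : Finset (Fin n))) (f : Fin n → ℕ) :
    ∑ B ∈ π.parts, ∑ j ∈ B, f j = ∑ j, f j := by
  classical
  conv_rhs => rw [show (univ : Finset (Fin n)) = π.parts.biUnion id from π.biUnion_parts.symm]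
  rw [Finset.sum_biUnion π.disjoint]
  rfl

/-- The deviation partition: move `j` from its part `A` into the part `B`. -/
lemma move_exists (π : Finpartition (univ : Finset (Fin n))) (j : Fin n)
    (A B : Finset (Fin n)) (hA : A ∈ π.parts) (hB : B ∈ π.parts)
    (hjA : j ∈ A) (hjB : j ∉ B) (hne : (A.erase j).Nonempty) :
    ∃ π' : Finpartition (univ : Finset (Fin n)),
      π'.parts = insert (insert j B)
        (insert (A.erase j) ((π.parts.erase A).erase B)) := by
  classical
  set R := (π.parts.erase A).erase B with hR
  have hRsub : ∀ C ∈ R, C ∈ π.parts ∧ C ≠ A ∧ C ≠ B := by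
    intro C hC
    simp only [hR, Finset.mem_erase] at hC
    exact ⟨hC.2.2, hC.2.1, hC.1⟩
  have hjR : ∀ C ∈ R, j ∉ C := by
    intro C hC hjC
    obtain ⟨hCp, hCA, _⟩ := hRsub C hC
    exact hCA (π.eq_of_mem_parts hCp hA hjC hjA)
  have hAB : A ≠ B := fun h => hjB (h ▸ hjA)
  have hdAB : Disjoint A B := π.disjoint hA hB hAB
  have hdisj : ∀ C ∈ R, Disjoint A C ∧ Disjoint B C := by
    intro C hC
    obtain ⟨hCp, hCA, hCB⟩ := hRsub C hC
    exact ⟨π.disjoint hA hCp (Ne.symm hCA), π.disjoint hB hCp (Ne.symm hCB)⟩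
  refine ⟨⟨insert (insert j B) (insert (A.erase j) R), ?_, ?_, ?_⟩, rfl⟩
  · rw [Finset.supIndep_iff_pairwiseDisjoint]
    intro C hC D hD hCD
    simp only [Finset.coe_insert, Set.mem_insert_iff, Finset.mem_coe] at hC hD
    have key : ∀ X Y : Finset (Fin n),
        (X = insert j B ∨ X = A.erase j ∨ X ∈ R) →
        (Y = insert j B ∨ Y = A.erase j ∨ Y ∈ R) → X ≠ Y → Disjoint X Y := by
      rintro X Y (rfl | rfl | hX) (rfl | rfl | hY) hXY
      · exact absurd rfl hXY
      · refine Finset.disjoint_insert_left.2 ⟨Finset.notMem_erase _ _, ?_⟩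
        exact (hdAB.symm.mono_right (Finset.erase_subset _ _))
      · exact Finset.disjoint_insert_left.2 ⟨hjR _ hY, (hdisj _ hY).2⟩
      · refine Finset.disjoint_insert_right.2 ⟨Finset.notMem_erase _ _, ?_⟩
        exact (hdAB.symm.mono_right (Finset.erase_subset _ _)).symm
      · exact absurd rfl hXY
      · exact ((hdisj _ hY).1.mono_left (Finset.erase_subset _ _))
      · exact (Finset.disjoint_insert_left.2 ⟨hjR _ hX, (hdisj _ hX).2⟩).symm
      · exact ((hdisj _ hX).1.mono_left (Finset.erase_subset _ _)).symm
      · obtain ⟨hXp, _, _⟩ := hRsub _ hX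
        obtain ⟨hYp, _, _⟩ := hRsub _ hY
        exact π.disjoint hXp hYp hXY
    exact key C D hC hD hCD
  · apply le_antisymm
    · exact Finset.sup_le fun C _ => Finset.subset_univ C
    · intro x _
      rw [Finset.mem_sup]
      by_cases hxj : x = j
      · exact ⟨insert j B, Finset.mem_insert_self _ _, by simp [hxj]⟩
      by_cases hxA : x ∈ A
      · exact ⟨A.erase j, Finset.mem_insert_of_mem (Finset.mem_insert_self _ _),
          Finset.mem_erase.2 ⟨hxj, hxA⟩⟩
      · set C := π.part x with hC
        have hCp : C ∈ π.parts := π.part_mem.2 (Finset.mem_univ x)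
        have hxC : x ∈ C := π.mem_part (Finset.mem_univ x)
        by_cases hCB : C = B
        · exact ⟨insert j B, Finset.mem_insert_self _ _,
            Finset.mem_insert_of_mem (hCB ▸ hxC)⟩
        · have hCA : C ≠ A := fun h => hxA (h ▸ hxC)
          exact ⟨C, Finset.mem_insert_of_mem (Finset.mem_insert_of_mem
            (Finset.mem_erase.2 ⟨hCB, Finset.mem_erase.2 ⟨hCA, hCp⟩⟩)),
            hxC⟩
  · intro hbot
    simp only [Finset.bot_eq_empty, Finset.mem_insert] at hbot
    rcases hbot with h | h | h
    · exact (Finset.insert_nonempty _ _).ne_empty h.symm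
    · exact hne.ne_empty h.symm
    · exact π.bot_notMem (by simpa using (hRsub _ h).1)

/-- Merge all uncovered parts into a fixed covered part `B₀`. -/
lemma merge_exists (π : Finpartition (univ : Finset (Fin n))) (a : Fin n → ℕ) (b : ℕ)
    (B₀ : Finset (Fin n)) (hB₀ : B₀ ∈ π.parts) (hcovB₀ : b ≤ binSize a B₀) :
    ∃ π' : Finpartition (univ : Finset (Fin n)),
      π'.parts = insert
        (B₀ ∪ (univ \ (π.parts.filter fun B => b ≤ binSize a B).sup id))
        ((π.parts.filter fun B => b ≤ binSize a B).erase B₀) := by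
  classical
  set F := π.parts.filter fun B => b ≤ binSize a B with hF
  have hB₀F : B₀ ∈ F := Finset.mem_filter.2 ⟨hB₀, hcovB₀⟩
  set X := F.sup id with hX
  set U := (univ : Finset (Fin n)) \ X with hU
  have hsubX : ∀ C ∈ F, C ⊆ X := fun C hC => Finset.le_sup (f := id) hC
  have hFsub : ∀ C ∈ F.erase B₀, C ∈ π.parts ∧ C ≠ B₀ := by
    intro C hC
    have h1 := Finset.mem_of_mem_erase hC
    exact ⟨(Finset.mem_filter.1 h1).1, Finset.ne_of_mem_erase hC⟩
  refine ⟨⟨insert (B₀ ∪ U) (F.erase B₀), ?_, ?_, ?_⟩, rfl⟩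
  · rw [Finset.supIndep_iff_pairwiseDisjoint]
    intro C hC D hD hCD
    simp only [Finset.coe_insert, Set.mem_insert_iff, Finset.mem_coe] at hC hD
    have key : ∀ Y ∈ F.erase B₀, Disjoint (B₀ ∪ U) Y := by
      intro Y hY
      obtain ⟨hYp, hYne⟩ := hFsub Y hY
      refine Finset.disjoint_union_left.2 ⟨π.disjoint hB₀ hYp (Ne.symm hYne), ?_⟩
      exact Finset.sdiff_disjoint.mono_right (hsubX Y (Finset.mem_of_mem_erase hY))
    rcases hC with rfl | hC
    · rcases hD with rfl | hD
      · exact absurd rfl hCD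
      · exact key D hD
    · rcases hD with rfl | hD
      · exact (key C hC).symm
      · exact π.disjoint (hFsub C hC).1 (hFsub D hD).1 hCD
  · apply le_antisymm
    · exact Finset.sup_le fun C _ => Finset.subset_univ C
    · intro x _
      rw [Finset.mem_sup]
      by_cases hx : x ∈ X
      · rw [hX, Finset.mem_sup] at hx
        obtain ⟨C, hCF, hxC⟩ := hx
        by_cases hCB : C = B₀
        · exact ⟨B₀ ∪ U, Finset.mem_insert_self _ _,
            Finset.mem_union_left _ (hCB ▸ hxC)⟩
        · exact ⟨C, Finset.mem_insert_of_mem (Finset.mem_erase.2 ⟨hCB, hCF⟩), hxC⟩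
      · exact ⟨B₀ ∪ U, Finset.mem_insert_self _ _,
          Finset.mem_union_right _ (Finset.mem_sdiff.2 ⟨Finset.mem_univ x, hx⟩)⟩
  · intro hbot
    simp only [Finset.bot_eq_empty, Finset.mem_insert] at hbot
    rcases hbot with h | h
    · have : B₀.Nonempty := π.nonempty_of_mem_parts hB₀
      exact this.ne_empty (Finset.union_eq_empty.1 h.symm).1
    · exact π.bot_notMem (by simpa using (hFsub _ h).1)

lemma payoffIn_nonneg' (a : Fin n → ℕ) (b : ℕ) (j : Fin n) (B : Finset (Fin n)) :
    (0:ℚ) ≤ if b ≤ binSize a B then (a j : ℚ) / (binSize a B : ℚ) else 0 := by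
  split <;> positivity

end Aux

set_option maxHeartbeats 1000000

/-- every instance admits an NE whose welfare equals `OPT`
(price of stability w.r.t. NE is 1). -/
theorem stmt3 (n : ℕ) (hn : 1 ≤ n) (a : Fin n → ℕ) (b : ℕ)
    (ha : ∀ j, 0 < a j) (hab : ∀ j, a j < b) :
    ∃ π : Finpartition (univ : Finset (Fin n)),
      IsNE a b π ∧ ∀ σ : Finpartition (univ : Finset (Fin n)),
        welfare a b σ ≤ welfare a b π := by
  classical
  have hpnn : ∀ (j : Fin n)
      (B : Finset (Fin n)), (0:ℚ) ≤ payoffIn a b j B := by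
    intro j B
    rw [payoffIn]
    split <;> positivity
  have j₀ : Fin n := ⟨0, hn⟩
  haveI : Nonempty (Fin n) := ⟨j₀⟩
  have hb2 : 2 ≤ b := by have h1 := ha j₀; have h2 := hab j₀; omega
  have hune : (univ : Finset (Fin n)) ≠ ⊥ := by
    simp [Finset.bot_eq_empty, Finset.univ_eq_empty_iff]
  haveI : Nonempty (Finpartition (univ : Finset (Fin n))) :=
    ⟨Finpartition.indiscrete hune⟩
  have hwn : ∀ σ : Finpartition (univ : Finset (Fin n)), welfare a b σ ≤ n := by
    intro σ
    calc welfare a b σ ≤ σ.parts.card := Finset.card_filter_le _ _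
      _ ≤ (univ : Finset (Fin n)).card := σ.card_parts_le_card
      _ = n := by simp
  set σ₀ := Function.argmin
    (fun σ : Finpartition (univ : Finset (Fin n)) => n - welfare a b σ)
    with hσ₀
  set M := welfare a b σ₀ with hMdef
  have hM : ∀ σ, welfare a b σ ≤ M := by
    intro σ
    have h1 := Function.argmin_le
      (fun σ : Finpartition (univ : Finset (Fin n)) => n - welfare a b σ)
      σ
    have h2 := hwn σ
    have h3 := hwn σ₀
    simp only [← hσ₀, ← hMdef] at h1
    omega
  by_cases hM0 : M = 0
  · refine ⟨Finpartition.indiscrete hune, ⟨?_, ?_⟩, ?_⟩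
    · intro j B hB hjB
      exfalso
      have hBu : B = univ := by
        simpa [Finpartition.indiscrete] using hB
      exact hjB (hBu ▸ Finset.mem_univ j)
    · intro j
      have h1 : binSize a {j} = a j := by simp [binSize]
      rw [payoffIn, h1, if_neg (not_le.2 (hab j))]
      exact hpnn j _
    · intro σ
      have := hM σ
      omega
  -- main case : M ≥ 1
  set S := ∑ j, a j with hS
  set Q : Finpartition (univ : Finset (Fin n)) → ℕ :=
    fun π => ∑ B ∈ π.parts, (binSize a B)^2 with hQdef
  set unc : Finpartition (univ : Finset (Fin n)) → ℕ :=
    fun π => (π.parts.filter fun B => ¬ b ≤ binSize a B).card with huncdef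
  set Φ : Finpartition (univ : Finset (Fin n)) → ℕ :=
    fun π => (M - welfare a b π) * ((n+1) * (S^2+1)) + unc π * (S^2+1) + Q π
    with hΦdef
  have hsize : ∀ π : Finpartition (univ : Finset (Fin n)),
      ∑ B ∈ π.parts, binSize a B = S := fun π => sum_parts_eq π a
  have hQle : ∀ π, Q π ≤ S^2 := by
    intro π
    calc Q π ≤ (∑ B ∈ π.parts, binSize a B)^2 := sum_sq_le_sq_sum' _ _
      _ = S^2 := by rw [hsize π]
  have hMpos : 1 ≤ M := Nat.one_le_iff_ne_zero.2 hM0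
  have hFne : (σ₀.parts.filter fun B => b ≤ binSize a B).Nonempty := by
    rw [← Finset.card_pos]
    exact lt_of_lt_of_le Nat.zero_lt_one hMpos
  obtain ⟨B₀, hB₀F⟩ := hFne
  have hB₀p : B₀ ∈ σ₀.parts := (Finset.mem_filter.1 hB₀F).1
  have hB₀c : b ≤ binSize a B₀ := (Finset.mem_filter.1 hB₀F).2
  obtain ⟨W, hW⟩ := merge_exists σ₀ a b B₀ hB₀p hB₀c
  have hWcov : ∀ C ∈ W.parts, b ≤ binSize a C := by
    intro C hC
    rw [hW] at hC
    rcases Finset.mem_insert.1 hC with rfl | hC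
    · exact le_trans hB₀c (binSize_mono a Finset.subset_union_left)
    · exact (Finset.mem_filter.1 (Finset.mem_of_mem_erase hC)).2
  have hBUnotin : B₀ ∪ (univ \ (σ₀.parts.filter fun B => b ≤ binSize a B).sup id)
      ∉ (σ₀.parts.filter fun B => b ≤ binSize a B).erase B₀ := by
    intro h
    have hCp : B₀ ∪ (univ \ (σ₀.parts.filter fun B => b ≤ binSize a B).sup id)
        ∈ σ₀.parts := (Finset.mem_filter.1 (Finset.mem_of_mem_erase h)).1
    have hCne := Finset.ne_of_mem_erase h
    have hdis := σ₀.disjoint hB₀p hCp (Ne.symm hCne)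
    have hB₀ne : B₀.Nonempty := σ₀.nonempty_of_mem_parts hB₀p
    obtain ⟨x, hx⟩ := hB₀ne
    exact (Finset.disjoint_left.1 hdis hx) (Finset.mem_union_left _ hx)
  have hWcard : W.parts.card = M := by
    rw [hW, Finset.card_insert_of_notMem hBUnotin, Finset.card_erase_of_mem hB₀F]
    have h1 : (σ₀.parts.filter fun B => b ≤ binSize a B).card = M := rfl
    omega
  have hWw : welfare a b W = M := by
    rw [welfare, Finset.filter_true_of_mem hWcov, hWcard]
  have hWunc : unc W = 0 := by
    simp only [huncdef]
    rw [Finset.filter_false_of_mem, Finset.card_empty]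
    intro C hC
    exact not_not.2 (hWcov C hC)
  have hΦW : Φ W ≤ S^2 := by
    simp only [hΦdef, hWw, hWunc, Nat.sub_self, Nat.zero_mul, Nat.zero_add]
    exact hQle W
  set π := Function.argmin Φ with hπdef
  have hΦπ : ∀ σ, Φ π ≤ Φ σ := fun σ => Function.argmin_le Φ σ
  have hΦπS : Φ π ≤ S^2 := le_trans (hΦπ W) hΦW
  have hH1 : S^2 + 1 ≤ (n+1) * (S^2+1) := Nat.le_mul_of_pos_left _ (Nat.succ_pos n)
  have hwπ : welfare a b π = M := by
    by_contra h
    have h1 : welfare a b π ≤ M := hM π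
    have h2 : 1 ≤ M - welfare a b π := by omega
    have h3 : (n+1) * (S^2+1) ≤ (M - welfare a b π) * ((n+1) * (S^2+1)) :=
      Nat.le_mul_of_pos_left _ h2
    simp only [hΦdef] at hΦπS
    omega
  have huncπ : unc π = 0 := by
    by_contra h
    have h2 : 1 ≤ unc π := Nat.one_le_iff_ne_zero.2 h
    have h3 : S^2+1 ≤ unc π * (S^2+1) := Nat.le_mul_of_pos_left _ h2
    simp only [hΦdef] at hΦπS
    omega
  have hπcov : ∀ C ∈ π.parts, b ≤ binSize a C := by
    intro C hC
    by_contra hc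
    have h1 : C ∈ π.parts.filter fun B => ¬ b ≤ binSize a B :=
      Finset.mem_filter.2 ⟨hC, hc⟩
    have h2 : (π.parts.filter fun B => ¬ b ≤ binSize a B) = ∅ :=
      Finset.card_eq_zero.1 huncπ
    rw [h2] at h1
    exact absurd h1 (Finset.notMem_empty C)
  have hQmin : ∀ σ, welfare a b σ = M → unc σ = 0 → Q π ≤ Q σ := by
    intro σ h1 h2
    have h3 := hΦπ σ
    simp only [hΦdef, h1, h2, hwπ, huncπ, Nat.sub_self, Nat.zero_mul,
      Nat.zero_add] at h3
    exact h3
  refine ⟨π, ⟨?_, ?_⟩, fun σ => le_trans (hM σ) (le_of_eq hwπ.symm)⟩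
  · -- the Nash condition
    intro j B hB hjB
    by_contra hlt
    push_neg at hlt
    set A := π.part j with hA
    have hjA : j ∈ A := π.mem_part (Finset.mem_univ j)
    have hAp : A ∈ π.parts := π.part_mem.2 (Finset.mem_univ j)
    have hAc : b ≤ binSize a A := hπcov A hAp
    have hBc : b ≤ binSize a B := hπcov B hB
    have hsins : binSize a (insert j B) = a j + binSize a B := by
      rw [binSize, binSize, Finset.sum_insert hjB]
    have hic : b ≤ binSize a (insert j B) := by rw [hsins]; omega
    rw [payoffIn, payoffIn, if_pos hic, if_pos hAc] at hlt
    have key : binSize a (insert j B) < binSize a A := by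
      by_contra hge
      push_neg at hge
      refine absurd hlt (not_lt.2 ?_)
      have hposA : (0:ℚ) < (binSize a A : ℚ) := by
        have : 0 < binSize a A := by omega
        exact_mod_cast this
      exact div_le_div_of_nonneg_left (by positivity) hposA (by exact_mod_cast hge)
    have hjAe : binSize a A = binSize a (A.erase j) + a j := by
      rw [binSize, binSize]
      exact (Finset.sum_erase_add A _ hjA).symm
    have haj := ha j
    have hAec : b ≤ binSize a (A.erase j) := by
      rw [hsins] at key
      omega
    have hAene : (A.erase j).Nonempty := by
      rw [Finset.nonempty_iff_ne_empty]
      intro h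
      rw [h] at hAec
      simp [binSize] at hAec
      omega
    obtain ⟨π', hπ'⟩ := move_exists π j A B hAp hB hjA hjB hAene
    set R := (π.parts.erase A).erase B with hRdef
    have hAB : A ≠ B := fun h => hjB (h ▸ hjA)
    have hBmemA : B ∈ π.parts.erase A := Finset.mem_erase.2 ⟨Ne.symm hAB, hB⟩
    have hpartsdecomp : π.parts = insert A (insert B R) := by
      rw [hRdef, Finset.insert_erase hBmemA, Finset.insert_erase hAp]
    have hAnotin : A ∉ insert B R := by
      rw [hRdef, Finset.insert_erase hBmemA]
      exact Finset.notMem_erase _ _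
    have hBnotinR : B ∉ R := Finset.notMem_erase _ _
    have hRfacts : ∀ C ∈ R, C ∈ π.parts ∧ C ≠ A ∧ C ≠ B := by
      intro C hC
      simp only [hRdef, Finset.mem_erase] at hC
      exact ⟨hC.2.2, hC.2.1, hC.1⟩
    have hjnotinR : ∀ C ∈ R, j ∉ C := by
      intro C hC hjC
      obtain ⟨hCp, hCA, _⟩ := hRfacts C hC
      exact hCA (π.eq_of_mem_parts hCp hAp hjC hjA)
    have h1 : insert j B ∉ insert (A.erase j) R := by
      simp only [Finset.mem_insert]
      rintro (h | h)
      · have : j ∈ A.erase j := h ▸ Finset.mem_insert_self j B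
        exact Finset.notMem_erase _ _ this
      · exact hjnotinR _ h (Finset.mem_insert_self j B)
    have h2 : A.erase j ∉ R := by
      intro h
      obtain ⟨x, hx⟩ := hAene
      have hxA : x ∈ A := Finset.mem_of_mem_erase hx
      obtain ⟨hCp, hCA, _⟩ := hRfacts _ h
      exact hCA (π.eq_of_mem_parts hCp hAp hx hxA)
    have hsumπ : ∀ g : Finset (Fin n) → ℕ,
        ∑ C ∈ π.parts, g C = g A + (g B + ∑ C ∈ R, g C) := by
      intro g
      rw [hpartsdecomp, Finset.sum_insert hAnotin, Finset.sum_insert hBnotinR]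
    have hsumπ' : ∀ g : Finset (Fin n) → ℕ,
        ∑ C ∈ π'.parts, g C = g (insert j B) + (g (A.erase j) + ∑ C ∈ R, g C) := by
      intro g
      rw [hπ', Finset.sum_insert h1, Finset.sum_insert h2]
    have hπ'cov : ∀ C ∈ π'.parts, b ≤ binSize a C := by
      intro C hC
      rw [hπ'] at hC
      rcases Finset.mem_insert.1 hC with rfl | hC
      · exact hic
      rcases Finset.mem_insert.1 hC with rfl | hC
      · exact hAec
      · exact hπcov C (hRfacts C hC).1
    have hπ'card : π'.parts.card = π.parts.card := by
      rw [hπ', hpartsdecomp, Finset.card_insert_of_notMem h1,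
        Finset.card_insert_of_notMem h2, Finset.card_insert_of_notMem hAnotin,
        Finset.card_insert_of_notMem hBnotinR]
    have hw' : welfare a b π' = M := by
      rw [welfare, Finset.filter_true_of_mem hπ'cov, hπ'card, ← hwπ, welfare,
        Finset.filter_true_of_mem hπcov]
    have hunc' : unc π' = 0 := by
      simp only [huncdef]
      rw [Finset.filter_false_of_mem, Finset.card_empty]
      intro C hC
      exact not_not.2 (hπ'cov C hC)
    have hQ' : Q π' < Q π := by
      simp only [hQdef]
      rw [hsumπ' (fun C => (binSize a C)^2), hsumπ (fun C => (binSize a C)^2)]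
      have e1 : binSize a (insert j B) = a j + binSize a B := hsins
      rw [hsins] at key ⊢
      nlinarith [key, hjAe, haj]
    exact absurd (hQmin π' hw' hunc') (not_le.2 hQ')
  · intro j
    have h1 : binSize a {j} = a j := by simp [binSize]
    rw [payoffIn, h1, if_neg (not_le.2 (hab j))]
    exact hpnn j _
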